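/- Let A be a primitive PC(η)-axial algebra with Frobenius form (·,·) normalized by (a,a) = 1 on primitive axes. Let a be a primitive axis and x, y ∈ A, and set α = (a,x), β = (x,y), γ = (a,y), ψ = (a, xy). Then a(xy) + x(ay) + y(ax) = ((1+η)(ψ - αγ) - ηβ)·a - γη·x - αη·y + (1+η)·(xy + γ·ax + α·ay). -/
import Mathlib


open Submodule

variable {F : Type*} [Field F] {A : Type*} [NonUnitalNonAssocCommRing A]
  [Module F A] [SMulCommClass F A A] [IsScalarTower F A A]

variable (F) in
/-- The `lam`-eigenspace of the adjoint map of `a`. -/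
def PCeig (a : A) (lam : F) : Submodule F A where
  carrier := {x : A | a * x = lam • x}
  add_mem' := by
    intro x y hx hy
    simp only [Set.mem_setOf_eq] at hx hy ⊢
    rw [mul_add, hx, hy, smul_add]
  zero_mem' := by simp
  smul_mem' := by
    intro c x hx
    simp only [Set.mem_setOf_eq] at hx ⊢
    rw [mul_smul_comm, hx, smul_smul, smul_smul, mul_comm]

variable (F) in
/-- The fusion law `PC(η)` for an idempotent (axis) `a`. -/
structure IsPCAxis (η : F) (a : A) : Prop where
  idem : a * a = a
  decomp : PCeig F a 1 ⊔ PCeig F a η ⊔ PCeig F a (1/2 : F) = ⊤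
  fus11 : ∀ x ∈ PCeig F a 1, ∀ y ∈ PCeig F a 1, x * y ∈ PCeig F a 1
  fus1e : ∀ x ∈ PCeig F a 1, ∀ y ∈ PCeig F a η, x * y ∈ PCeig F a η
  fus1h : ∀ x ∈ PCeig F a 1, ∀ y ∈ PCeig F a (1/2 : F), x * y ∈ PCeig F a (1/2 : F)
  fusee : ∀ x ∈ PCeig F a η, ∀ y ∈ PCeig F a η, x * y ∈ PCeig F a 1
  fuseh : ∀ x ∈ PCeig F a η, ∀ y ∈ PCeig F a (1/2 : F), x * y ∈ PCeig F a (1/2 : F)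
  fushh : ∀ x ∈ PCeig F a (1/2 : F), ∀ y ∈ PCeig F a (1/2 : F),
    x * y ∈ PCeig F a 1 ⊔ PCeig F a η

variable (F) in
/-- A primitive axis: an axis with `A_1(a) = F·a` (one-dimensional). -/
def IsPrimPCAxis (η : F) (a : A) : Prop :=
  IsPCAxis F η a ∧ a ≠ 0 ∧ PCeig F a 1 = Submodule.span F {a}

variable (F A) in
/-- A `PC(η)`-axial algebra: generated, as a non-unital algebra, by a (nonempty) set of axes. -/
def IsPCAxialAlgebra (η : F) : Prop :=
  ∃ X : Set A, X.Nonempty ∧ (∀ a ∈ X, IsPCAxis F η a) ∧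
    NonUnitalAlgebra.adjoin F X = ⊤

variable (F A) in
/-- A primitive `PC(η)`-axial algebra: generated by a (nonempty) set of primitive axes. -/
def IsPrimPCAxialAlgebra (η : F) : Prop :=
  ∃ X : Set A, X.Nonempty ∧ (∀ a ∈ X, IsPrimPCAxis F η a) ∧
    NonUnitalAlgebra.adjoin F X = ⊤

omit [SMulCommClass F A A] [IsScalarTower F A A] in
theorem orth_aux (B : A →ₗ[F] A →ₗ[F] F)
    (hBfrob : ∀ x y z : A, B (x * y) z = B x (y * z))
    (a : A) {l m : F} (hlm : l ≠ m) {x y : A}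
    (hx : a * x = l • x) (hy : a * y = m • y) : B x y = 0 := by
  have e1 : B (a * x) y = l * (B x y) := by rw [hx, map_smul]; simp
  have e2 : B (a * x) y = m * (B x y) := by
    rw [mul_comm a x, hBfrob, hy, map_smul]; simp
  have h2 : (l - m) * B x y = 0 := by rw [sub_mul, ← e1, ← e2, sub_self]
  rcases mul_eq_zero.mp h2 with h | h
  · exact absurd (sub_eq_zero.mp h) hlm
  · exact h

/-- for a primitive axis `a` and any `x`, `y`, with `α = (a,x)`, `β = (x,y)`,
`γ = (a,y)`, `ψ = (a,xy)`:
`a(xy) + x(ay) + y(ax) = ((1+η)(ψ-αγ) - ηβ) a - γη x - αη y + (1+η)(xy + γ ax + α ay)`. -/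
theorem stmt14 (η : F) (h2 : (2 : F) ≠ 0) (hη1 : η ≠ 1) (hηh : η ≠ 1 / 2)
    (hA : IsPrimPCAxialAlgebra F A η)
    (B : A →ₗ[F] A →ₗ[F] F) (hB0 : B ≠ 0)
    (hBsymm : ∀ x y : A, B x y = B y x)
    (hBfrob : ∀ x y z : A, B (x * y) z = B x (y * z))
    (hBnorm : ∀ a : A, IsPrimPCAxis F η a → B a a = 1)
    (a : A) (ha : IsPrimPCAxis F η a)
    (x y : A) (α β γ ψ : F)
    (hα : α = B a x) (hβ : β = B x y) (hγ : γ = B a y) (hψ : ψ = B a (x * y)) :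
    a * (x * y) + x * (a * y) + y * (a * x) =
      ((1 + η) * (ψ - α * γ) - η * β) • a - (γ * η) • x - (α * η) • y +
        (1 + η) • (x * y + γ • (a * x) + α • (a * y)) := by
  have hidem : a * a = a := ha.1.idem
  have hBaa : B a a = 1 := hBnorm a ha
  have h1η : (1 : F) ≠ η := fun h => hη1 h.symm
  have h1h : (1 : F) ≠ 1/2 := by
    intro h
    rw [eq_div_iff h2, one_mul] at h
    exact one_ne_zero (by linear_combination h : (1 : F) = 0)
  have hh1 : (1/2 : F) ≠ 1 := h1h.symm
  have hhη : (1/2 : F) ≠ η := hηh.symm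
  have haE1 : a * a = (1 : F) • a := by rw [one_smul, hidem]
  -- decompose x
  have hxtop : x ∈ PCeig F a 1 ⊔ PCeig F a η ⊔ PCeig F a (1/2 : F) := by
    rw [ha.1.decomp]; trivial
  obtain ⟨z, hz, p, hp, hzp⟩ := Submodule.mem_sup.mp hxtop
  obtain ⟨x1, hx1, u, hu, hx1u⟩ := Submodule.mem_sup.mp hz
  rw [ha.2.2] at hx1
  obtain ⟨c, hc⟩ := Submodule.mem_span_singleton.mp hx1
  have hau : a * u = η • u := hu
  have hap : a * p = (1/2 : F) • p := hp
  have hxdec : x = c • a + u + p := by rw [← hzp, ← hx1u, hc]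
  -- decompose y
  have hytop : y ∈ PCeig F a 1 ⊔ PCeig F a η ⊔ PCeig F a (1/2 : F) := by
    rw [ha.1.decomp]; trivial
  obtain ⟨z', hz', q, hq, hzq⟩ := Submodule.mem_sup.mp hytop
  obtain ⟨y1, hy1, v, hv, hy1v⟩ := Submodule.mem_sup.mp hz'
  rw [ha.2.2] at hy1
  obtain ⟨d, hd⟩ := Submodule.mem_span_singleton.mp hy1
  have hav : a * v = η • v := hv
  have haq : a * q = (1/2 : F) • q := hq
  have hydec : y = d • a + v + q := by rw [← hzq, ← hy1v, hd]
  -- orthogonality facts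
  have hBau : B a u = 0 := orth_aux B hBfrob a h1η haE1 hau
  have hBav : B a v = 0 := orth_aux B hBfrob a h1η haE1 hav
  have hBap : B a p = 0 := orth_aux B hBfrob a h1h haE1 hap
  have hBaq : B a q = 0 := orth_aux B hBfrob a h1h haE1 haq
  have hBua : B u a = 0 := (hBsymm u a).trans hBau
  have hBva : B v a = 0 := (hBsymm v a).trans hBav
  have hBpa : B p a = 0 := (hBsymm p a).trans hBap
  have hBqa : B q a = 0 := (hBsymm q a).trans hBaq
  have hBuq : B u q = 0 := orth_aux B hBfrob a hηh hau haq
  have hBpv : B p v = 0 := orth_aux B hBfrob a hhη hap hav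
  -- coefficients
  have hαc : α = c := by
    rw [hα, hxdec]
    simp [hBaa, hBau, hBap]
  have hγd : γ = d := by
    rw [hγ, hydec]
    simp [hBaa, hBav, hBaq]
  rw [← hαc] at hxdec
  rw [← hγd] at hydec
  clear hαc hγd hc hd hzp hx1u hzq hy1v hx1 hy1
  -- product uv
  have huvmem : u * v ∈ PCeig F a 1 := ha.1.fusee u hu v hv
  rw [ha.2.2] at huvmem
  obtain ⟨e, he⟩ := Submodule.mem_span_singleton.mp huvmem
  have heval : e = η * B u v := by
    have h1 : B a (u * v) = e := by rw [← he]; simp [hBaa]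
    have h3 : B a (u * v) = η * B u v := by
      rw [← hBfrob, hau, map_smul]; simp
    rw [← h1, h3]
  have huv : u * v = (η * B u v) • a := by rw [← he, heval]
  -- product pq
  have hpqmem : p * q ∈ PCeig F a 1 ⊔ PCeig F a η := ha.1.fushh p hp q hq
  obtain ⟨z1, hz1, w, hw, hzw⟩ := Submodule.mem_sup.mp hpqmem
  rw [ha.2.2] at hz1
  obtain ⟨e', he'⟩ := Submodule.mem_span_singleton.mp hz1
  have haw : a * w = η • w := hw
  have hBaw : B a w = 0 := orth_aux B hBfrob a h1η haE1 haw
  have he'val : e' = (1/2 : F) * B p q := by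
    have h1 : B a (p * q) = e' := by
      rw [← hzw, ← he']; simp [hBaa, hBaw]
    have h3 : B a (p * q) = (1/2 : F) * B p q := by
      rw [← hBfrob, hap, map_smul]; simp
    rw [← h1, h3]
  have hpq : p * q = ((1/2 : F) * B p q) • a + w := by
    rw [← hzw, ← he', he'val]
  -- atoms u*q, p*v
  have hauq : a * (u * q) = (1/2 : F) • (u * q) := ha.1.fuseh u hu q hq
  have hapv : a * (p * v) = (1/2 : F) • (p * v) := by
    rw [mul_comm p v]; exact ha.1.fuseh v hv p hp
  have hBauq : B a (u * q) = 0 := orth_aux B hBfrob a h1h haE1 hauq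
  have hBapv : B a (p * v) = 0 := orth_aux B hBfrob a h1h haE1 hapv
  -- comm variants
  have hua : u * a = η • u := by rw [mul_comm]; exact hau
  have hva : v * a = η • v := by rw [mul_comm]; exact hav
  have hpa : p * a = (1/2 : F) • p := by rw [mul_comm]; exact hap
  have hqa : q * a = (1/2 : F) • q := by rw [mul_comm]; exact haq
  have hvu : v * u = (η * B u v) • a := by rw [mul_comm]; exact huv
  have hqp : q * p = ((1/2 : F) * B p q) • a + w := by rw [mul_comm]; exact hpq
  have hqu : q * u = u * q := mul_comm q u
  have hvp : v * p = p * v := mul_comm v p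
  -- expansion of x*y
  have hxy : x * y = (α * γ + η * B u v + (1/2 : F) * B p q) • a + (γ * η) • u
      + (α * η) • v + (γ * (1/2 : F)) • p + (α * (1/2 : F)) • q + u * q + p * v + w := by
    rw [hxdec, hydec]
    simp only [mul_add, add_mul, smul_mul_assoc, mul_smul_comm, smul_add, smul_smul,
      hidem, hau, hav, hap, haq, hua, hva, hpa, hqa, huv, hpq]
    module
  -- values of psi and beta
  have hψval : ψ = α * γ + η * B u v + (1/2 : F) * B p q := by
    rw [hψ, hxy]
    simp [hBaa, hBau, hBav, hBap, hBaq, hBaw, hBauq, hBapv]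
  have hβval : β = α * γ + B u v + B p q := by
    rw [hβ, hxdec, hydec]
    simp [hBaa, hBau, hBap, hBav, hBaq, hBua, hBpa, hBuq, hBpv]
  -- main computation
  rw [hψval, hβval, hxdec, hydec]
  simp only [mul_add, add_mul, smul_add, smul_mul_assoc, mul_smul_comm, smul_smul,
    hidem, hau, hav, hap, haq, hua, hva, hpa, hqa, huv, hvu, hpq, hqp, hqu, hvp,
    hauq, hapv, haw]
  match_scalars <;> field_simp <;> ring
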